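/- Let M be a finite MDP with N states and A actions, and let π and π' be two Markov randomized policies with induced transition matrices P_π and P_{π'}. Then the induced-∞-norm of their difference satisfies ‖P_π − P_{π'}‖_∞ = max_i Σ_j |(P_π)_{ij} − (P_{π'})_{ij}| ≤ ρ(M, P_{π'}). -/
import Mathlib


/-- ρ(M, Y) for an MDP with transition probabilities `P a i j = P(j | i, a)`. -/
noncomputable def rho {N A : ℕ} (P : Fin A → Fin N → Fin N → ℝ)
    (Y : Fin N → Fin N → ℝ) : ℝ :=
  ⨆ i, ∑ j, (((⨆ a, P a i j) - ⨅ a, P a i j) / 2 +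
    |Y i j - ((⨆ a, P a i j) + (⨅ a, P a i j)) / 2|)

lemma wavg_mem {A : ℕ} [NeZero A] (w f : Fin A → ℝ) (hw : ∀ a, 0 ≤ w a)
    (hw1 : ∑ a, w a = 1) :
    (⨅ a, f a) ≤ ∑ a, w a * f a ∧ ∑ a, w a * f a ≤ ⨆ a, f a := by
  constructor
  · calc (⨅ a, f a) = ∑ a, w a * (⨅ a, f a) := by
          rw [← Finset.sum_mul, hw1, one_mul]
    _ ≤ ∑ a, w a * f a := by
          apply Finset.sum_le_sum
          intro a _
          exact mul_le_mul_of_nonneg_left (ciInf_le (Set.Finite.bddBelow (Set.finite_range f)) a) (hw a)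
  · calc ∑ a, w a * f a ≤ ∑ a, w a * (⨆ a, f a) := by
          apply Finset.sum_le_sum
          intro a _
          exact mul_le_mul_of_nonneg_left (le_ciSup (Set.Finite.bddAbove (Set.finite_range f)) a) (hw a)
    _ = ⨆ a, f a := by rw [← Finset.sum_mul, hw1, one_mul]

/-- The ∞-norm of the difference of two induced transition matrices is at most
`ρ(M, P_{π'})`. -/
theorem induced_diff_le_rho {N A : ℕ} [NeZero N] [NeZero A]
    (P : Fin A → Fin N → Fin N → ℝ)
    (hPnn : ∀ a i j, 0 ≤ P a i j)
    (hProw : ∀ a i, ∑ j, P a i j = 1)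
    (pol pol' : Fin N → Fin A → ℝ)
    (hpolnn : ∀ s a, 0 ≤ pol s a) (hpolrow : ∀ s, ∑ a, pol s a = 1)
    (hpol'nn : ∀ s a, 0 ≤ pol' s a) (hpol'row : ∀ s, ∑ a, pol' s a = 1)
    (Ppol Ppol' : Fin N → Fin N → ℝ)
    (hPpol : ∀ i j, Ppol i j = ∑ a, pol i a * P a i j)
    (hPpol' : ∀ i j, Ppol' i j = ∑ a, pol' i a * P a i j) :
    (⨆ i, ∑ j, |Ppol i j - Ppol' i j|) ≤ rho P Ppol' := by
  unfold rho
  apply ciSup_le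
  intro i
  have key : ∑ j, |Ppol i j - Ppol' i j| ≤
      ∑ j, (((⨆ a, P a i j) - ⨅ a, P a i j) / 2 +
        |Ppol' i j - ((⨆ a, P a i j) + (⨅ a, P a i j)) / 2|) := by
    apply Finset.sum_le_sum
    intro j _
    set c := ((⨆ a, P a i j) + (⨅ a, P a i j)) / 2 with hc
    have h1 := wavg_mem (pol i) (fun a => P a i j) (hpolnn i) (hpolrow i)
    have h2 : |Ppol i j - c| ≤ ((⨆ a, P a i j) - ⨅ a, P a i j) / 2 := by
      rw [abs_le, hPpol]
      constructor <;> [linarith [h1.1]; linarith [h1.2]]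
    calc |Ppol i j - Ppol' i j| ≤ |Ppol i j - c| + |Ppol' i j - c| := by
          have := abs_sub_abs_le_abs_sub (Ppol i j - c) (Ppol' i j - c)
          have := abs_sub (Ppol i j - c) (Ppol' i j - c)
          have h3 : Ppol i j - Ppol' i j = (Ppol i j - c) - (Ppol' i j - c) := by ring
          rw [h3]
          exact abs_sub _ _
    _ ≤ _ := by linarith [h2]
  exact key.trans (le_ciSup (f := fun i => ∑ j, (((⨆ a, P a i j) - ⨅ a, P a i j) / 2 +
    |Ppol' i j - ((⨆ a, P a i j) + (⨅ a, P a i j)) / 2|))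
    (Set.Finite.bddAbove (Set.finite_range _)) i)
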